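/- The braid shelf operation a ◃ b := a · sh(b) · σ1 · sh(a)⁻¹ on the infinite braid group B∞ obeys the left selfdistributivity law: a ◃ (b ◃ c) = (a ◃ b) ◃ (a ◃ c) for all a, b, c ∈ B∞. -/

import Mathlib

/-- The braid relations on the generators `σ₁, σ₂, …` (generator `i : ℕ` stands
for `σ_{i+1}`): `σi σj = σj σi` for `|i − j| ≥ 2` and `σi σj σi = σj σi σj`
for `|i − j| = 1`, written as relators. -/
def braidRels : Set (FreeGroup ℕ) :=
  {r | ∃ i j : ℕ,
    (i + 2 ≤ j ∧
      r = FreeGroup.of i * FreeGroup.of j * (FreeGroup.of i)⁻¹ * (FreeGroup.of j)⁻¹) ∨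
    (j = i + 1 ∧
      r = FreeGroup.of i * FreeGroup.of j * FreeGroup.of i *
        (FreeGroup.of j)⁻¹ * (FreeGroup.of i)⁻¹ * (FreeGroup.of j)⁻¹)}

/-- The braid group `B∞` on infinitely many strands, as a presented group. -/
abbrev BInf : Type := PresentedGroup braidRels

/-- The generator `σ_{i+1}` of `B∞`; in particular `σ 0` is `σ₁`. -/
def σ (i : ℕ) : BInf := PresentedGroup.of i

/-- The braid shelf operation `a ◃ b := a * sh b * σ₁ * (sh a)⁻¹`,
relative to the shift endomorphism `sh`. -/
def braidAct (sh : BInf →* BInf) (a b : BInf) : BInf :=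
  a * sh b * σ 0 * (sh a)⁻¹

/-- the braid shelf operation on `B∞` obeys the left
selfdistributivity law, where `sh` is the shift endomorphism, i.e. the group
endomorphism of `B∞` with `sh (σ i) = σ (i+1)` for all `i`. -/
lemma braid_rel_eq_one {r : FreeGroup ℕ} (h : r ∈ braidRels) :
    (QuotientGroup.mk r : BInf) = 1 := by
  rw [QuotientGroup.eq_one_iff]
  exact Subgroup.subset_normalClosure h

lemma sigma_comm {i j : ℕ} (h : i + 2 ≤ j) : σ i * σ j = σ j * σ i := by
  have h1 : σ i * σ j * (σ i)⁻¹ * (σ j)⁻¹ = 1 := by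
    have := braid_rel_eq_one ⟨i, j, Or.inl ⟨h, rfl⟩⟩
    exact this
  exact mul_inv_eq_iff_eq_mul.mp (mul_inv_eq_one.mp h1)

lemma sigma_braid (i : ℕ) : σ i * σ (i+1) * σ i = σ (i+1) * σ i * σ (i+1) := by
  have h1 : σ i * σ (i+1) * σ i * (σ (i+1))⁻¹ * (σ i)⁻¹ * (σ (i+1))⁻¹ = 1 := by
    have := braid_rel_eq_one ⟨i, i+1, Or.inr ⟨rfl, rfl⟩⟩
    exact this
  exact mul_inv_eq_iff_eq_mul.mp (mul_inv_eq_iff_eq_mul.mp (mul_inv_eq_one.mp h1))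

lemma sh_sh_comm (sh : BInf →* BInf) (hsh : ∀ i : ℕ, sh (σ i) = σ (i + 1)) (x : BInf) :
    σ 0 * sh (sh x) = sh (sh x) * σ 0 := by
  have hx : x ∈ Subgroup.closure (Set.range (PresentedGroup.of : ℕ → BInf)) := by
    rw [PresentedGroup.closure_range_of]; trivial
  have hmem : x ∈ (Subgroup.centralizer {σ 0}).comap (sh.comp sh) := by
    refine Subgroup.closure_le _ |>.mpr ?_ hx
    rintro _ ⟨i, rfl⟩
    refine Subgroup.mem_comap.mpr (Subgroup.mem_centralizer_iff.mpr ?_)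
    intro g hg
    rw [Set.mem_singleton_iff] at hg
    subst hg
    have h2 : (sh.comp sh) (PresentedGroup.of i) = σ (i + 2) := by
      show sh (sh (σ i)) = σ (i + 2)
      rw [hsh, hsh]
    rw [h2]
    exact sigma_comm (by omega)
  exact Subgroup.mem_centralizer_iff.mp (Subgroup.mem_comap.mp hmem) (σ 0) rfl

lemma key {G : Type*} [Group G] (s0 s1 A B C : G)
    (hA : s0 * A = A * s0) (hB : s0 * B = B * s0) (hC : s0 * C = C * s0)
    (hbr : s0 * s1 * s0 = s1 * s0 * s1) :
    C * s1 * B⁻¹ * s0 = s0 * C * s1 * A⁻¹ * s0 * A * s1⁻¹ * B⁻¹ := by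
  have hA' : A⁻¹ * s0 * A = s0 := by rw [mul_assoc, hA]; group
  have hC' : s0 * C * s0⁻¹ = C := by rw [hC]; group
  have hB' : B⁻¹ * s0 = s0 * B⁻¹ := by
    have := congrArg (fun x => B⁻¹ * x * B⁻¹) hB
    simpa [mul_assoc] using this
  have h1 : s1 * s0 * s1⁻¹ = s0⁻¹ * s1 * s0 := by
    have := congrArg (fun x => s0⁻¹ * x * s1⁻¹) hbr
    simpa [mul_assoc] using this
  calc C * s1 * B⁻¹ * s0
      = C * s1 * (B⁻¹ * s0) := by group
    _ = C * s1 * (s0 * B⁻¹) := by rw [hB']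
    _ = s0 * C * s0⁻¹ * s1 * s0 * B⁻¹ := by rw [hC']; group
    _ = s0 * C * (s1 * s0 * s1⁻¹) * B⁻¹ := by rw [h1]; group
    _ = s0 * C * s1 * (A⁻¹ * s0 * A) * s1⁻¹ * B⁻¹ := by rw [hA']; group
    _ = s0 * C * s1 * A⁻¹ * s0 * A * s1⁻¹ * B⁻¹ := by group

theorem braidAct_self_distrib (sh : BInf →* BInf) (hsh : ∀ i : ℕ, sh (σ i) = σ (i + 1))
    (a b c : BInf) :
    braidAct sh a (braidAct sh b c) = braidAct sh (braidAct sh a b) (braidAct sh a c) := by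
  have hA := sh_sh_comm sh hsh a
  have hB := sh_sh_comm sh hsh b
  have hC := sh_sh_comm sh hsh c
  have hcore := key (σ 0) (σ 1) (sh (sh a)) (sh (sh b)) (sh (sh c)) hA hB hC (sigma_braid 0)
  simp only [braidAct, map_mul, map_inv, hsh, Nat.zero_add]
  calc a * (sh b * sh (sh c) * σ 1 * (sh (sh b))⁻¹) * σ 0 * (sh a)⁻¹
      = a * sh b * (sh (sh c) * σ 1 * (sh (sh b))⁻¹ * σ 0) * (sh a)⁻¹ := by group
    _ = a * sh b * (σ 0 * sh (sh c) * σ 1 * (sh (sh a))⁻¹ * σ 0 * sh (sh a) * (σ 1)⁻¹ *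
        (sh (sh b))⁻¹) * (sh a)⁻¹ := by rw [hcore]
    _ = a * sh b * σ 0 * (sh a)⁻¹ * (sh a * sh (sh c) * σ 1 * (sh (sh a))⁻¹) * σ 0 *
        (sh a * sh (sh b) * σ 1 * (sh (sh a))⁻¹)⁻¹ := by group
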